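/- Let 0 → M₁ → E → M₂ → 0 be a short exact sequence of holomorphic vector bundles on a compact complex space X with M₁, M₂ line bundles, and suppose H⁰(M₁ ⊗ M₂^∨) = 0, H⁰(M₂ ⊗ M₁^∨) = 0, dim H⁰(O_X) = 1, and the extension is non-split. Then E is simple, i.e. every endomorphism of E is a scalar multiple of the identity. -/
import Mathlib


open CategoryTheory

/-- Proposition 3.6 (2),(4), abstracted: a non-split extension
`0 → M₁ → E → M₂ → 0` of line bundles with `Hom(M₂,M₁) = 0`, `Hom(M₁,M₂) = 0`
(i.e. `H⁰(M₁⊗M₂^∨) = 0 = H⁰(M₂⊗M₁^∨)`) and one-dimensional endomorphism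
algebras of `M₁`, `M₂` (i.e. `dim H⁰(O) = 1`) has simple central term `E`:
every endomorphism of `E` is a scalar multiple of the identity.  The category
`C` models holomorphic vector bundles on the compact complex space; `hker` and
`hcoker` express exactness of the sequence. -/
theorem stmt8 (C : Type*) [Category C] [Preadditive C] [Linear ℂ C]
    (M1 E M2 : C) (i : M1 ⟶ E) (p : E ⟶ M2)
    (hip : i ≫ p = 0) (hmono : Mono i) (hepi : Epi p)
    (hker : ∀ {X : C} (f : X ⟶ E), f ≫ p = 0 → ∃ g : X ⟶ M1, g ≫ i = f)
    (hcoker : ∀ {X : C} (f : E ⟶ X), i ≫ f = 0 → ∃ g : M2 ⟶ X, p ≫ g = f)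
    (hEnd1 : ∀ f : M1 ⟶ M1, ∃ c : ℂ, f = c • 𝟙 M1)
    (hEnd2 : ∀ f : M2 ⟶ M2, ∃ c : ℂ, f = c • 𝟙 M2)
    (hHom21 : ∀ f : M2 ⟶ M1, f = 0) (hHom12 : ∀ f : M1 ⟶ M2, f = 0)
    (hnonsplit : ¬ ∃ s : M2 ⟶ E, s ≫ p = 𝟙 M2) :
    ∀ φ : E ⟶ E, ∃ c : ℂ, φ = c • 𝟙 E := by
  intro φ
  -- i ≫ φ factors through M1
  obtain ⟨g, hg⟩ := hker (i ≫ φ) (by rw [Category.assoc]; have := hHom12 (i ≫ φ ≫ p); simpa using this)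
  obtain ⟨a, ha⟩ := hEnd1 g
  -- then i ≫ (φ - a • 𝟙) = 0
  have h1 : i ≫ (φ - a • 𝟙 E) = 0 := by
    simp [Preadditive.comp_sub, ← hg, ha]
  obtain ⟨h, hh⟩ := hcoker _ h1
  have hb : h ≫ p = 0 := by
    obtain ⟨b, hb⟩ := hEnd2 (h ≫ p)
    rcases eq_or_ne b 0 with rfl | hb0
    · simpa using hb
    · exfalso; exact hnonsplit ⟨b⁻¹ • h, by
        rw [Linear.smul_comp, hb, smul_smul, inv_mul_cancel₀ hb0, one_smul]⟩
  obtain ⟨k, hk⟩ := hker h hb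
  have : h = 0 := by rw [← hk, hHom21 k, Limits.zero_comp]
  rw [this, Limits.comp_zero] at hh
  exact ⟨a, sub_eq_zero.mp hh.symm⟩
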